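/- For any 0 < δ < 1/10, the set A = {(x₁,x₂) ∈ ℝ² : x₁x₂ ≤ δ/4, δ ≤ x₁ ≤ 1/4, δ ≤ x₂ ≤ 1/4} satisfies rot_s A ⊆ B(1/2) for every s ∈ [−π/4, π/4), and its planar Lebesgue measure equals ∫_δ^{1/4} (δ/(4t)) dt − δ(1/4 − δ), which is strictly greater than (δ/4)·ln(1/(12δ)). -/

import Mathlib

open MeasureTheory Filter Set Real
open scoped ENNReal

noncomputable section

/-- Rotation of the plane about the origin by angle `s`. -/
def rot (s : ℝ) (p : ℝ × ℝ) : ℝ × ℝ :=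
  (p.1 * Real.cos s - p.2 * Real.sin s, p.1 * Real.sin s + p.2 * Real.cos s)

/-- The open rectangle with slope `s`, corner `c` and side lengths `a`, `b`. -/
def rect (s : ℝ) (c : ℝ × ℝ) (a b : ℝ) : Set (ℝ × ℝ) :=
  (fun p => c + rot s p) '' (Set.Ioo 0 a ×ˢ Set.Ioo 0 b)

/-- `R` is an open rectangle with slope `s` whose side lengths satisfy `P`. -/
def IsRectWith (s : ℝ) (P : ℝ → Prop) (R : Set (ℝ × ℝ)) : Prop :=
  ∃ c a b, 0 < a ∧ 0 < b ∧ P a ∧ P b ∧ R = rect s c a b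

/-- `R` is an open rectangle with slope `s`. -/
def IsRect (s : ℝ) (R : Set (ℝ × ℝ)) : Prop :=
  IsRectWith s (fun _ => True) R

/-- Average of `f` over the set `R`. -/
def avg (f : ℝ × ℝ → ℝ) (R : Set (ℝ × ℝ)) : ℝ :=
  (∫ p in R, f p) / (volume R).toReal

/-- The filter of slope-`s` rectangles containing `x` with diameters shrinking to `0`. -/
def rectFilter (s : ℝ) (x : ℝ × ℝ) : Filter (Set (ℝ × ℝ)) :=
  ⨅ d ∈ Set.Ioi (0 : ℝ), Filter.principal {R | IsRect s R ∧ x ∈ R ∧ Metric.diam R < d}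

/-- The upper derivative `D̄_s f (x)`. -/
def upperDeriv (s : ℝ) (f : ℝ × ℝ → ℝ) (x : ℝ × ℝ) : EReal :=
  Filter.limsup (fun R => (avg f R : EReal)) (rectFilter s x)

/-- The basis `R_s` differentiates the integral of `f`. -/
def Differentiates (s : ℝ) (f : ℝ × ℝ → ℝ) : Prop :=
  ∀ᵐ x : ℝ × ℝ, Filter.Tendsto (fun R => avg f R) (rectFilter s x) (nhds (f x))

/-- `S ⊆ [0, π/2)` is a `G_δ` set in `[0, π/2)`. -/
def IsGdeltaIn (S : Set ℝ) : Prop :=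
  ∃ G : ℕ → Set ℝ, (∀ k, IsOpen (G k)) ∧ S = (⋂ k, G k) ∩ Set.Ico 0 (π / 2)

/-- `S` is a `G_δσ` set in `[0, π/2)`. -/
def IsGdeltaSigmaIn (S : Set ℝ) : Prop :=
  ∃ F : ℕ → Set ℝ, (∀ n, IsGdeltaIn (F n)) ∧ S = ⋃ n, F n

/-- `S` is an `R`-set. -/
def IsRSet (S : Set ℝ) : Prop :=
  S ⊆ Set.Ico 0 (π / 2) ∧
    ∃ f : ℝ × ℝ → ℝ, Integrable f ∧
      (∀ s ∈ Set.Ico 0 (π / 2) \ S, Differentiates s f) ∧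
      (∀ s ∈ S, ∀ᵐ x : ℝ × ℝ, upperDeriv s f x = ⊤)

/-- `S` is a `WR`-set. -/
def IsWRSet (S : Set ℝ) : Prop :=
  S ⊆ Set.Ico 0 (π / 2) ∧
    ∃ f : ℝ × ℝ → ℝ, Integrable f ∧
      (∀ s ∈ Set.Ico 0 (π / 2) \ S, Differentiates s f) ∧
      (∀ s ∈ S, 0 < volume {x : ℝ × ℝ | upperDeriv s f x = ⊤})

/-- The grid square `Q_k^n` of side `1/n`. -/
def gridSq (n : ℕ) (k : ℤ × ℤ) : Set (ℝ × ℝ) :=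
  (fun x : ℝ × ℝ => ((n : ℝ))⁻¹ • (((k.1 : ℝ), (k.2 : ℝ)) + x)) ''
    (Set.Ico (-(1 : ℝ)/2) (1/2) ×ˢ Set.Ico (-(1 : ℝ)/2) (1/2))

/-- `mes_* A = inf_k |A ∩ Q_k|`. -/
def mesLow (A : Set (ℝ × ℝ)) : ℝ :=
  ⨅ k : ℤ × ℤ, (volume (A ∩ gridSq 1 k)).toReal

/-- `mes^* A = sup_k |A ∩ Q_k|`. -/
def mesUp (A : Set (ℝ × ℝ)) : ℝ :=
  ⨆ k : ℤ × ℤ, (volume (A ∩ gridSq 1 k)).toReal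

/-- `dil_n A = {x : n x ∈ A}`. -/
def dil (n : ℕ) (A : Set (ℝ × ℝ)) : Set (ℝ × ℝ) :=
  {x : ℝ × ℝ | (n : ℝ) • x ∈ A}

/-- `A` is a `δ`-set with respect to the slope `s`: a union of mutually disjoint
rectangles of slope `s` with both side lengths `≥ δ`. -/
def IsDeltaSet (s δ : ℝ) (A : Set (ℝ × ℝ)) : Prop :=
  ∃ (ι : Type) (R : ι → Set (ℝ × ℝ)),
    (∀ i, IsRectWith s (fun a => δ ≤ a) (R i)) ∧
      Pairwise (Function.onFun Disjoint R) ∧ A = ⋃ i, R i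

/-- The maximal function over slope-`s` rectangles whose side lengths satisfy `P`. -/
def maxFn (s : ℝ) (P : ℝ → Prop) (f : ℝ × ℝ → ℝ) (x : ℝ × ℝ) : ℝ≥0∞ :=
  ⨆ (R : Set (ℝ × ℝ)) (_ : IsRectWith s P R ∧ x ∈ R),
    ENNReal.ofReal (|∫ p in R, f p| / (volume R).toReal)

/-- The points `θ_k`, `k = ±1, ±2, …`. -/
def theta (ε γ : ℝ) (k : ℤ) : ℝ × ℝ :=
  (ε / 2 ^ k.natAbs, (k.sign : ℝ) * Real.tan γ * ε / 2 ^ k.natAbs)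

/-- The strip `Γ_s(ε)`. -/
def strip (s ε : ℝ) : Set (ℝ × ℝ) :=
  rot s '' {x : ℝ × ℝ | |x.2| < ε}

/-- The Euclidean ball `B(ε)` in the plane. -/
def euclBall (ε : ℝ) : Set (ℝ × ℝ) :=
  {x : ℝ × ℝ | Real.sqrt (x.1 ^ 2 + x.2 ^ 2) ≤ ε}

/-- the set `A = {x₁ x₂ ≤ δ/4, δ ≤ x₁, x₂ ≤ 1/4}` stays in `B(1/2)`
under rotations `s ∈ [-π/4, π/4)`, and its area is
`∫_δ^{1/4} δ/(4t) dt - δ(1/4 - δ) > (δ/4) ln(1/(12δ))`. -/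
theorem measure_hyperbolic_region (δ : ℝ) (hδ : 0 < δ ∧ δ < 1 / 10) :
    (∀ s ∈ Set.Ico (-(π / 4)) (π / 4),
      rot s '' {x : ℝ × ℝ | x.1 * x.2 ≤ δ / 4 ∧ δ ≤ x.1 ∧ x.1 ≤ 1 / 4 ∧ δ ≤ x.2 ∧ x.2 ≤ 1 / 4}
        ⊆ euclBall (1 / 2)) ∧
    (volume {x : ℝ × ℝ | x.1 * x.2 ≤ δ / 4 ∧ δ ≤ x.1 ∧ x.1 ≤ 1 / 4 ∧ δ ≤ x.2 ∧ x.2 ≤ 1 / 4}).toReal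
      = (∫ t in δ..(1 / 4), δ / (4 * t)) - δ * (1 / 4 - δ) ∧
    (∫ t in δ..(1 / 4), δ / (4 * t)) - δ * (1 / 4 - δ) > δ / 4 * Real.log (1 / (12 * δ)) := by
  obtain ⟨hδ0, hδ1⟩ := hδ
  have hδ4 : δ < 1 / 4 := by linarith
  set A : Set (ℝ × ℝ) :=
    {x : ℝ × ℝ | x.1 * x.2 ≤ δ / 4 ∧ δ ≤ x.1 ∧ x.1 ≤ 1 / 4 ∧ δ ≤ x.2 ∧ x.2 ≤ 1 / 4} with hA
  have hAclosed : IsClosed A := by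
    rw [hA]
    simp only [Set.setOf_and]
    exact (isClosed_le (continuous_fst.mul continuous_snd) continuous_const).inter
      ((isClosed_le continuous_const continuous_fst).inter
        ((isClosed_le continuous_fst continuous_const).inter
          ((isClosed_le continuous_const continuous_snd).inter
            (isClosed_le continuous_snd continuous_const))))
  have hAmeas : MeasurableSet A := hAclosed.measurableSet
  -- slice computation
  have hslice : ∀ x : ℝ, Prod.mk x ⁻¹' A =
      if x ∈ Set.Icc δ (1 / 4) then Set.Icc δ (δ / (4 * x)) else (∅ : Set ℝ) := by
    intro x
    by_cases hx : x ∈ Set.Icc δ (1 / 4)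
    · obtain ⟨hx1, hx2⟩ := hx
      have hx0 : 0 < x := lt_of_lt_of_le hδ0 hx1
      rw [if_pos ⟨hx1, hx2⟩]
      ext y
      simp only [Set.mem_preimage, hA, Set.mem_setOf_eq, Set.mem_Icc]
      constructor
      · rintro ⟨hxy, _, _, hy1, hy2⟩
        refine ⟨hy1, ?_⟩
        rw [le_div_iff₀ (by positivity)]
        nlinarith
      · rintro ⟨hy1, hy2⟩
        rw [le_div_iff₀ (by positivity)] at hy2
        refine ⟨by nlinarith, hx1, hx2, hy1, by nlinarith⟩
    · rw [if_neg hx]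
      ext y
      simp only [Set.mem_preimage, hA, Set.mem_setOf_eq, Set.mem_empty_iff_false, iff_false]
      rintro ⟨_, h1, h2, _, _⟩
      exact hx ⟨h1, h2⟩
  have key : (∫ t in δ..(1 / 4), δ / (4 * t)) - δ * (1 / 4 - δ)
      = δ / 4 * Real.log ((1 / 4) / δ) - δ * (1 / 4 - δ) := by
    congr 1
    have h0 : (0 : ℝ) ∉ Set.uIcc δ (1 / 4) := by
      rw [Set.uIcc_of_le hδ4.le]
      intro h
      exact absurd h.1 (by linarith)
    have heq : (fun t : ℝ => δ / (4 * t)) = fun t : ℝ => δ / 4 * t⁻¹ := by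
      funext t
      rw [division_def, mul_inv]
      ring
    rw [heq, intervalIntegral.integral_const_mul, integral_inv h0]
  refine ⟨?_, ?_, ?_⟩
  · rintro s _ p ⟨x, ⟨hxy, hx1, hx2, hy1, hy2⟩, rfl⟩
    simp only [euclBall, rot, Set.mem_setOf_eq]
    have hrot : (x.1 * Real.cos s - x.2 * Real.sin s) ^ 2
        + (x.1 * Real.sin s + x.2 * Real.cos s) ^ 2 = x.1 ^ 2 + x.2 ^ 2 := by
      nlinarith [Real.sin_sq_add_cos_sq s]
    rw [hrot]
    have hle : x.1 ^ 2 + x.2 ^ 2 ≤ (1 / 2) ^ 2 := by nlinarith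
    calc Real.sqrt (x.1 ^ 2 + x.2 ^ 2) ≤ Real.sqrt ((1 / 2) ^ 2) := Real.sqrt_le_sqrt hle
      _ = 1 / 2 := Real.sqrt_sq (by norm_num)
  · -- area computation
    have hIcc : MeasurableSet (Set.Icc δ (1 / 4) : Set ℝ) := measurableSet_Icc
    have hprod : (volume : Measure (ℝ × ℝ)) = (volume : Measure ℝ).prod volume :=
      MeasureTheory.Measure.volume_eq_prod ℝ ℝ
    have hvol : volume A = ∫⁻ x : ℝ in Set.Icc δ (1 / 4),
        ENNReal.ofReal (δ / (4 * x) - δ) := by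
      rw [hprod, MeasureTheory.Measure.prod_apply hAmeas]
      have : ∀ x : ℝ, volume (Prod.mk x ⁻¹' A)
          = Set.indicator (Set.Icc δ (1 / 4))
              (fun x => ENNReal.ofReal (δ / (4 * x) - δ)) x := by
        intro x
        rw [hslice x, Set.indicator]
        by_cases hx : x ∈ Set.Icc δ (1 / 4)
        · rw [if_pos hx, if_pos hx, Real.volume_Icc]
        · rw [if_neg hx, if_neg hx, measure_empty]
      simp_rw [this]
      rw [lintegral_indicator hIcc _]
    have hnn : 0 ≤ᵐ[volume.restrict (Set.Icc δ (1 / 4))] fun x : ℝ => δ / (4 * x) - δ := by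
      rw [Filter.EventuallyLE, ae_restrict_iff' hIcc]
      filter_upwards with x hx
      obtain ⟨hx1, hx2⟩ := hx
      have hx0 : 0 < x := lt_of_lt_of_le hδ0 hx1
      have : δ ≤ δ / (4 * x) := by
        rw [le_div_iff₀ (by positivity)]
        nlinarith
      simpa using this
    have hmeas : AEStronglyMeasurable (fun x : ℝ => δ / (4 * x) - δ)
        (volume.restrict (Set.Icc δ (1 / 4))) :=
      ((measurable_const.div (measurable_const.mul measurable_id)).sub
        measurable_const).aestronglyMeasurable
    have hint1 : IntervalIntegrable (fun t : ℝ => δ / (4 * t)) volume δ (1 / 4) := by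
      apply ContinuousOn.intervalIntegrable
      apply ContinuousOn.div continuousOn_const (continuousOn_const.mul continuousOn_id)
      intro t ht
      rw [Set.uIcc_of_le hδ4.le] at ht
      have : 0 < t := lt_of_lt_of_le hδ0 ht.1
      exact mul_ne_zero (by norm_num) this.ne'
    have hint2 : IntervalIntegrable (fun _ : ℝ => δ) volume δ (1 / 4) :=
      intervalIntegrable_const
    rw [hvol, ← MeasureTheory.integral_eq_lintegral_of_nonneg_ae hnn hmeas,
      MeasureTheory.integral_Icc_eq_integral_Ioc,
      ← intervalIntegral.integral_of_le hδ4.le,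
      intervalIntegral.integral_sub hint1 hint2,
      intervalIntegral.integral_const, smul_eq_mul]
    ring
  · rw [key]
    have h3 : (1 : ℝ) / 4 / δ = 3 * (1 / (12 * δ)) := by
      field_simp
      ring
    have hlog3 : 1 < Real.log 3 := by
      rw [Real.lt_log_iff_exp_lt (by norm_num : (0 : ℝ) < 3)]
      calc Real.exp 1 < 2.7182818286 := Real.exp_one_lt_d9
        _ < 3 := by norm_num
    rw [h3, Real.log_mul (by norm_num) (by positivity)]
    nlinarith

end
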